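/- Assume μ₀ := inf_{x∈V} μ(x) > 0, W(x,y) > 0 for all x ≠ y, and f(x,y) = 0 for all x ∈ V and all y ≤ 0. If u ∈ H_s is a nontrivial (u ≢ 0) weak solution, i.e., ∫_V (∇^s u ∇^s φ + h u φ) dμ = ∫_V f(x, u(x)) φ(x) dμ for all φ ∈ H_s, then u(x) > 0 for every x ∈ V. -/

import Mathlib

open Filter Topology

/-- The fractional gradient pairing
`∇^s u ∇^s v(x) = (1/(2μ(x))) Σ_{y} W(x,y)(u(x) − u(y))(v(x) − v(y))`
(the diagonal term vanishes since `W(x,x) = 0`). -/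
noncomputable def gradPair {V : Type*} (μ : V → ℝ) (W : V → V → ℝ) (u v : V → ℝ) (x : V) : ℝ :=
  (1 / (2 * μ x)) * ∑' y, W x y * (u x - u y) * (v x - v y)

/-- The norm `‖u‖_{H_s} = (∫_V (|∇^s u|² + h u²) dμ)^{1/2}`. -/
noncomputable def normHs {V : Type*} (μ : V → ℝ) (W : V → V → ℝ) (h : V → ℝ) (u : V → ℝ) : ℝ :=
  Real.sqrt (∑' x, (gradPair μ W u u x + h x * (u x) ^ 2) * μ x)

/-- Membership in `H_s`. -/
def memHs {V : Type*} (μ : V → ℝ) (W : V → V → ℝ) (h : V → ℝ) (u : V → ℝ) : Prop :=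
  (Summable fun x => (gradPair μ W u u x + h x * (u x) ^ 2) * μ x) ∧
  ∃ uk : ℕ → V → ℝ, (∀ k, (Function.support (uk k)).Finite) ∧
    Tendsto (fun k => normHs μ W h (fun x => uk k x - u x)) atTop (𝓝 0)

/-- If `f(x,y) = 0` for `y ≤ 0` and `u ∈ H_s` is a nontrivial weak solution of
`(−Δ)^s u + h u = f(x,u)`, then `u` is strictly positive. -/
theorem nontrivial_weak_solution_strictly_positive
    {V : Type*} [Countable V] [Infinite V]
    (μ : V → ℝ) (hμ : ∀ x, 0 < μ x) (hμ0 : 0 < ⨅ x, μ x)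
    (W : V → V → ℝ)
    (hWsymm : ∀ x y, W x y = W y x)
    (hWdiag : ∀ x, W x x = 0)
    (hWnonneg : ∀ x y, 0 ≤ W x y)
    (hWpos : ∀ x y, x ≠ y → 0 < W x y)
    (hWsum : ∀ x, Summable fun y => W x y)
    (h : V → ℝ) (hh0 : 0 < ⨅ x, h x)
    (f : V → ℝ → ℝ) (hf : ∀ x, ∀ y : ℝ, y ≤ 0 → f x y = 0)
    (u : V → ℝ) (hu : memHs μ W h u) (hune : u ≠ 0)
    (hweak : ∀ φ : V → ℝ, memHs μ W h φ →
      ∑' x, (gradPair μ W u φ x + h x * u x * φ x) * μ x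
        = ∑' x, f x (u x) * φ x * μ x) :
    ∀ x, 0 < u x := by
  classical
  -- pointwise lower bounds from the infima
  have hhbdd : BddBelow (Set.range h) := by
    by_contra hc
    rw [Real.iInf_of_not_bddBelow hc] at hh0
    exact lt_irrefl 0 hh0
  have hμbdd : BddBelow (Set.range μ) := by
    by_contra hc
    rw [Real.iInf_of_not_bddBelow hc] at hμ0
    exact lt_irrefl 0 hμ0
  have hh' : ∀ x, (⨅ x, h x) ≤ h x := fun x => ciInf_le hhbdd x
  have hμ' : ∀ x, (⨅ x, μ x) ≤ μ x := fun x => ciInf_le hμbdd x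
  have hhpos : ∀ x, 0 < h x := fun x => lt_of_lt_of_le hh0 (hh' x)
  -- summability of Σ W x x₀ in the first variable
  have hWsum' : ∀ x₀, Summable fun x => W x x₀ := by
    intro x₀
    have : (fun x => W x x₀) = fun x => W x₀ x := funext fun x => hWsymm x x₀
    rw [this]; exact hWsum x₀
  -- nonnegativity of gradPair v v
  have hgp : ∀ (v : V → ℝ) (x : V), 0 ≤ gradPair μ W v v x := by
    intro v x
    apply mul_nonneg
    · apply div_nonneg zero_le_one
      linarith [hμ x]
    · exact tsum_nonneg fun y => by nlinarith [hWnonneg x y, sq_nonneg (v x - v y)]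
  -- summability of h u² μ and of u²
  have hsum1 : Summable fun x => h x * u x ^ 2 * μ x := by
    refine Summable.of_nonneg_of_le (fun x => ?_) (fun x => ?_) hu.1
    · have := (hhpos x).le
      have := (hμ x).le
      positivity
    · nlinarith [hgp u x, hμ x, sq_nonneg (u x), hhpos x]
  have hsum2 : Summable fun x => u x ^ 2 := by
    set h0 := ⨅ x, h x with hh0def
    set m0 := ⨅ x, μ x with hm0def
    refine Summable.of_nonneg_of_le (fun x => sq_nonneg _)
      (fun x => ?_) (hsum1.mul_left (1 / (h0 * m0)))
    have hprod : h0 * m0 ≤ h x * μ x :=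
      mul_le_mul (hh' x) (hμ' x) (le_of_lt hμ0) (le_of_lt (hhpos x))
    have key : h0 * m0 * u x ^ 2 ≤ h x * u x ^ 2 * μ x := by
      nlinarith [sq_nonneg (u x), hprod]
    rw [one_div, inv_mul_eq_div, le_div_iff₀ (by positivity)]
    nlinarith [key]
  -- key pointwise equation at every vertex
  have key : ∀ x₀ : V, Summable (fun y => W x₀ y * (u x₀ - u y)) ∧
      (∑' y, W x₀ y * (u x₀ - u y)) + h x₀ * u x₀ * μ x₀ = f x₀ (u x₀) * μ x₀ := by
    intro x₀
    -- Step A : summability of T x = W x x₀ * (u x₀ - u x)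
    have hM : ∀ x, W x x₀ ≤ ∑' z, W z x₀ :=
      fun x => Summable.le_tsum (hWsum' x₀) x (fun j _ => hWnonneg j x₀)
    have hpart2 : Summable fun x => W x x₀ * u x := by
      rw [← summable_abs_iff]
      refine Summable.of_nonneg_of_le (fun x => abs_nonneg _)
        (fun x => ?_) (((hWsum' x₀).mul_right (1/2)).add (hsum2.mul_left ((∑' z, W z x₀) / 2)))
      rw [abs_mul, abs_of_nonneg (hWnonneg x x₀)]
      nlinarith [sq_nonneg (|u x| - 1), sq_abs (u x), abs_nonneg (u x), hWnonneg x x₀, hM x,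
        sq_nonneg (u x)]
    have hTA : Summable fun x => W x x₀ * (u x₀ - u x) := by
      have := (((hWsum' x₀).mul_right (u x₀)).sub hpart2)
      exact this.congr fun x => by ring
    have hTA' : Summable fun y => W x₀ y * (u x₀ - u y) := by
      refine hTA.congr fun y => ?_
      rw [hWsymm x₀ y]
    refine ⟨hTA', ?_⟩
    set e : V → ℝ := fun x => if x = x₀ then 1 else 0 with he
    have he0 : ∀ x, x ≠ x₀ → e x = 0 := fun x hx => if_neg hx
    have he1 : e x₀ = 1 := if_pos rfl
    -- gradPair e e off x₀
    have hgee : ∀ x, x ≠ x₀ → gradPair μ W e e x * μ x = W x x₀ / 2 := by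
      intro x hx
      have hinner : (∑' y, W x y * (e x - e y) * (e x - e y)) = W x x₀ := by
        rw [tsum_eq_single x₀ ?_]
        · rw [he0 x hx, he1]; ring
        · intro y hy; rw [he0 x hx, he0 y hy]; ring
      rw [gradPair, hinner]
      have hμne := (hμ x).ne'
      field_simp
    -- e ∈ H_s
    have hememb : memHs μ W h e := by
      constructor
      · set G' : V → ℝ := fun x => W x x₀ / 2 with hG'
        have hG's : Summable G' := (hWsum' x₀).div_const 2
        have hdiff : Summable fun x =>
            (gradPair μ W e e x + h x * e x ^ 2) * μ x - G' x := by
          apply summable_of_ne_finset_zero (s := {x₀})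
          intro x hx
          have hxne : x ≠ x₀ := by simpa using hx
          rw [he0 x hxne]
          have hg := hgee x hxne
          simp only [hG']
          linear_combination hg
        have : (fun x => (gradPair μ W e e x + h x * e x ^ 2) * μ x)
            = fun x => ((gradPair μ W e e x + h x * e x ^ 2) * μ x - G' x) + G' x :=
          funext fun x => by ring
        rw [this]
        exact hdiff.add hG's
      · refine ⟨fun _ => e, fun _ => Set.Finite.subset (Set.finite_singleton x₀) ?_, ?_⟩
        · intro x hx
          by_contra hxne
          exact hx (he0 x (by simpa using hxne))
        · have : (fun _ : ℕ => normHs μ W h (fun x => e x - e x)) = fun _ => 0 := by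
            funext k
            simp [normHs, gradPair]
          rw [this]
          exact tendsto_const_nhds
    -- apply the weak formulation with test function e
    have heq := hweak e hememb
    -- compute the RHS
    have hRHS : (∑' x, f x (u x) * e x * μ x) = f x₀ (u x₀) * μ x₀ := by
      rw [tsum_eq_single x₀ ?_]
      · rw [he1]; ring
      · intro y hy; rw [he0 y hy]; ring
    -- compute the LHS
    set S := ∑' y, W x₀ y * (u x₀ - u y) with hS
    set L : V → ℝ := fun x => (gradPair μ W u e x + h x * u x * e x) * μ x with hL
    set L' : V → ℝ := fun x => (1 / 2) * (W x x₀ * (u x₀ - u x)) with hL'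
    have hLoff : ∀ x, x ≠ x₀ → L x = L' x := by
      intro x hx
      have hinner : (∑' y, W x y * (u x - u y) * (e x - e y))
          = W x x₀ * (u x - u x₀) * (0 - 1) := by
        rw [tsum_eq_single x₀ ?_]
        · rw [he0 x hx, he1]
        · intro y hy; rw [he0 y hy, he0 x hx]; ring
      simp only [hL, hL', gradPair]
      rw [hinner, he0 x hx]
      have := (hμ x).ne'
      field_simp
      ring
    have hL's : Summable L' := hTA.mul_left (1/2)
    have hLs : Summable L := by
      have hdiff : Summable fun x => L x - L' x := by
        apply summable_of_ne_finset_zero (s := {x₀})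
        intro x hx
        rw [hLoff x (by simpa using hx)]
        ring
      have : L = fun x => (L x - L' x) + L' x := funext fun x => by ring
      rw [this]
      exact hdiff.add hL's
    have hLx₀ : L x₀ = (1 / 2) * S + h x₀ * u x₀ * μ x₀ := by
      have hinner : (∑' y, W x₀ y * (u x₀ - u y) * (e x₀ - e y)) = S := by
        rw [hS]
        refine tsum_congr fun y => ?_
        by_cases hy : y = x₀
        · subst hy; rw [hWdiag]; ring
        · rw [he1, he0 y hy]; ring
      simp only [hL, gradPair]
      rw [hinner, he1]
      have := (hμ x₀).ne'
      field_simp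
    have hLsum : (∑' x, L x) = S + h x₀ * u x₀ * μ x₀ := by
      rw [Summable.tsum_eq_add_tsum_ite hLs x₀, hLx₀]
      have hiteeq : (fun x => ite (x = x₀) 0 (L x)) = L' := by
        funext x
        by_cases hx : x = x₀
        · subst hx
          simp [hL', hWdiag x]
        · rw [if_neg hx, hLoff x hx]
      rw [hiteeq]
      have : (∑' x, L' x) = (1/2) * S := by
        rw [hL', tsum_mul_left, hS]
        congr 1
        refine tsum_congr fun x => ?_
        rw [hWsymm x x₀]
      rw [this]
      ring
    rw [← hLsum, ← hRHS]
    exact heq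
  -- nonnegativity of u
  have hnn : ∀ x, 0 ≤ u x := by
    by_contra hc
    push_neg at hc
    obtain ⟨x₁, hx₁⟩ := hc
    have hx1sq : (0 : ℝ) < u x₁ ^ 2 := by nlinarith [hx₁]
    have hcof : ∀ᶠ x in cofinite, u x ^ 2 < u x₁ ^ 2 :=
      (hsum2.tendsto_cofinite_zero).eventually_lt_const hx1sq
    have hfin : {y | u y ≤ u x₁}.Finite := by
      refine Set.Finite.subset (Filter.eventually_cofinite.mp hcof) ?_
      intro y hy
      simp only [Set.mem_setOf_eq] at hy ⊢
      nlinarith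
    have hx₁mem : x₁ ∈ hfin.toFinset := by simp
    obtain ⟨x₀, hx₀mem, hx₀min⟩ := hfin.toFinset.exists_min_image u ⟨x₁, hx₁mem⟩
    have hx₀le : u x₀ ≤ u x₁ := hx₀min x₁ hx₁mem
    have hmin : ∀ y, u x₀ ≤ u y := by
      intro y
      by_cases hy : u y ≤ u x₁
      · exact hx₀min y (by simpa using hy)
      · exact le_trans hx₀le (le_of_lt (not_le.mp hy))
    have hx₀neg : u x₀ < 0 := lt_of_le_of_lt hx₀le hx₁
    obtain ⟨hTsum, heq⟩ := key x₀
    rw [hf x₀ (u x₀) hx₀neg.le, zero_mul] at heq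
    have hSle : (∑' y, W x₀ y * (u x₀ - u y)) ≤ 0 :=
      tsum_nonpos fun y => mul_nonpos_of_nonneg_of_nonpos (hWnonneg x₀ y)
        (sub_nonpos.mpr (hmin y))
    have hneg : h x₀ * u x₀ * μ x₀ < 0 := by
      nlinarith [mul_pos (mul_pos (hhpos x₀) (hμ x₀)) (neg_pos.mpr hx₀neg)]
    linarith
  -- strict positivity
  intro x
  rcases (hnn x).lt_or_eq with hlt | heq0
  · exact hlt
  · exfalso
    obtain ⟨hTsum, heq⟩ := key x
    have hux : u x = 0 := heq0.symm
    rw [hf x (u x) (le_of_eq hux), zero_mul] at heq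
    have hzero : h x * u x * μ x = 0 := by rw [hux]; ring
    have heq' : (∑' y, W x y * (u x - u y)) = 0 := by linarith [heq, hzero]
    have hnonpos : ∀ z, W x z * (u x - u z) ≤ 0 := fun z =>
      mul_nonpos_of_nonneg_of_nonpos (hWnonneg x z)
        (by rw [hux]; linarith [hnn z])
    have hterm : ∀ y, W x y * (u x - u y) = 0 := by
      intro y
      have hS0 : (∑' z, -(W x z * (u x - u z))) = 0 := by
        rw [tsum_neg, heq']; ring
      have hle := Summable.le_tsum hTsum.neg y (fun j _ => by linarith [hnonpos j])
      rw [hS0] at hle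
      linarith [hnonpos y]
    apply hune
    funext y
    by_cases hy : y = x
    · simp [hy, hux]
    · have ht := hterm y
      have hWp := hWpos x y (fun hxy => hy hxy.symm)
      have hsub : u x - u y = 0 := by
        rcases mul_eq_zero.mp ht with h1 | h2
        · exact absurd h1 hWp.ne'
        · exact h2
      simp only [Pi.zero_apply]
      linarith [hsub, hux]
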